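/- Let S and A be finite nonempty sets, Q : S × A → ℝ, and for each s ∈ S set Δ(s) = max_{a∈A} Q(s,a) - min_{a∈A} Q(s,a). Let b : S → ℝ be a probability vector, let q ∈ S satisfy b(q) > 1/2, and let a ∈ A be an action that is optimal at q, i.e., Q(q,a) = max_{a'∈A} Q(q,a'). Then ∑_{s∈S} h(b(s))·Δ(s) ≥ 2·∑_{s∈S} b(s)·(max_{a'∈A} Q(s,a') - Q(s,a)), where h is the binary entropy function. -/
import Mathlib


open Finset

/-- Binary entropy function with base-2 logarithm.
    `Real.logb 2 0 = 0`, so the convention `0 · log₂ 0 = 0` holds. -/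
noncomputable def binEnt (p : ℝ) : ℝ :=
  -(p * Real.logb 2 p) - (1 - p) * Real.logb 2 (1 - p)

lemma binEnt_eq (p : ℝ) : binEnt p = Real.binEntropy p / Real.log 2 := by
  simp [binEnt, Real.binEntropy, Real.logb, Real.log_inv]
  ring

lemma binEnt_nonneg {p : ℝ} (h0 : 0 ≤ p) (h1 : p ≤ 1) : 0 ≤ binEnt p := by
  rw [binEnt_eq]
  exact div_nonneg (Real.binEntropy_nonneg h0 h1) (Real.log_nonneg (by norm_num))

lemma two_mul_le_binEnt {p : ℝ} (h0 : 0 ≤ p) (h1 : p ≤ 1/2) : 2 * p ≤ binEnt p := by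
  have hc := Real.strictConcave_binEntropy.concaveOn
  have key := hc.2 (Set.mem_Icc.2 ⟨by norm_num, by norm_num⟩ : (1/2:ℝ) ∈ Set.Icc (0:ℝ) 1)
    (Set.mem_Icc.2 ⟨le_refl 0, by norm_num⟩ : (0:ℝ) ∈ Set.Icc (0:ℝ) 1)
    (show (0:ℝ) ≤ 2*p by linarith) (show (0:ℝ) ≤ 1 - 2*p by linarith) (by ring)
  simp only [smul_eq_mul, mul_zero, add_zero, Real.binEntropy_zero, mul_zero, add_zero] at key
  have : (2*p) * (1/2 : ℝ) = p := by ring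
  rw [this] at key
  have h2 : Real.binEntropy (1/2) = Real.log 2 := by
    rw [show (1/2 : ℝ) = 2⁻¹ by norm_num, Real.binEntropy_two_inv]
  rw [h2] at key
  have hlog : (0:ℝ) < Real.log 2 := Real.log_pos (by norm_num)
  rw [binEnt_eq, le_div_iff₀ hlog]
  linarith

theorem weighted_entropy_bound_dominant_state
    {S A : Type*} [Fintype S] [Fintype A] [Nonempty S] [Nonempty A]
    (Q : S × A → ℝ)
    (Δ : S → ℝ)
    (hΔ : ∀ s : S, Δ s = (univ.sup' univ_nonempty fun a => Q (s, a)) -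
                        (univ.inf' univ_nonempty fun a => Q (s, a)))
    (b : S → ℝ) (hb0 : ∀ s, 0 ≤ b s) (hb1 : ∑ s, b s = 1)
    (q : S) (hq : 1 / 2 < b q)
    (a : A) (ha : Q (q, a) = univ.sup' univ_nonempty fun a' => Q (q, a')) :
    2 * ∑ s, b s * ((univ.sup' univ_nonempty fun a' => Q (s, a')) - Q (s, a))
      ≤ ∑ s, binEnt (b s) * Δ s := by
  classical
  rw [Finset.mul_sum]
  apply Finset.sum_le_sum
  intro s _
  have hbs1 : b s ≤ 1 := by
    have := Finset.single_le_sum (f := b) (fun i _ => hb0 i) (Finset.mem_univ s)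
    linarith [hb1 ▸ this]
  have hΔs : 0 ≤ Δ s := by
    rw [hΔ s]
    have h1 := Finset.inf'_le (fun a => Q (s, a)) (Finset.mem_univ a)
    have h2 := Finset.le_sup' (fun a => Q (s, a)) (Finset.mem_univ a)
    linarith
  have hgap : (univ.sup' univ_nonempty fun a' => Q (s, a')) - Q (s, a) ≤ Δ s := by
    rw [hΔ s]
    have := Finset.inf'_le (fun a => Q (s, a)) (Finset.mem_univ a)
    linarith
  have hgap0 : 0 ≤ (univ.sup' univ_nonempty fun a' => Q (s, a')) - Q (s, a) := by
    have := Finset.le_sup' (fun a => Q (s, a)) (Finset.mem_univ a)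
    linarith
  by_cases hs : s = q
  · subst hs
    rw [← ha, sub_self, mul_zero, mul_zero]
    exact mul_nonneg (binEnt_nonneg (hb0 s) hbs1) hΔs
  · have hhalf : b s ≤ 1 / 2 := by
      have hle : b s + b q ≤ ∑ t, b t := by
        rw [← Finset.sum_pair hs]
        exact Finset.sum_le_sum_of_subset_of_nonneg (Finset.subset_univ _)
          (fun i _ _ => hb0 i)
      rw [hb1] at hle; linarith
    calc 2 * (b s * ((univ.sup' univ_nonempty fun a' => Q (s, a')) - Q (s, a)))
        ≤ 2 * (b s * Δ s) := by
          have := mul_le_mul_of_nonneg_left hgap (hb0 s); linarith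
      _ = (2 * b s) * Δ s := by ring
      _ ≤ binEnt (b s) * Δ s :=
          mul_le_mul_of_nonneg_right (two_mul_le_binEnt (hb0 s) hhalf) hΔs
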